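/- For three real-valued functions x, y, z on {1,...,n} (not necessarily centered), the algebraic identity n³ ∑_{i=1}^n (x_i − x̄)(y_i − ȳ)(z_i − z̄) = (n³−3n²+2n) ∑_i x'_i y'_i z'_i − (n²−2n) ∑_{i≠j}(x'_i y'_i z'_j + x'_i y'_j z'_j + x'_j y'_i z'_i) + 2n ∑_{i,j,s pairwise distinct} x'_i y'_j z'_s holds, where x'_i = x_i − x̄ etc. and the centered sequences sum to zero (equivalently, the identity holds when ∑ x_i = ∑ y_i = ∑ z_i = 0 after replacing x'_i by x_i). -/

import Mathlib

open Finset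

lemma stmt6_aux (n : ℕ) (X Y Z : Fin n → ℝ)
    (hX : ∑ i, X i = 0) (hY : ∑ i, Y i = 0) (hZ : ∑ i, Z i = 0) :
    (n : ℝ) ^ 3 * ∑ i, X i * Y i * Z i
    = ((n : ℝ) ^ 3 - 3 * (n : ℝ) ^ 2 + 2 * n) * ∑ i, X i * Y i * Z i
      - ((n : ℝ) ^ 2 - 2 * n) *
        ∑ i, ∑ j ∈ Finset.univ \ {i},
          (X i * Y i * Z j + X i * Y j * Z j + X j * Y i * Z i)
      + 2 * (n : ℝ) *
        ∑ i, ∑ j ∈ Finset.univ \ {i}, ∑ s ∈ Finset.univ \ {i, j},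
          X i * Y j * Z s := by
  have key : ∀ (f : Fin n → ℝ) (i : Fin n),
      ∑ j ∈ Finset.univ \ {i}, f j = (∑ j, f j) - f i := by
    intro f i
    rw [Finset.sum_sdiff_eq_sub (Finset.subset_univ _), Finset.sum_singleton]
  have key2 : ∀ (f : Fin n → ℝ) (i j : Fin n), j ∉ ({i} : Finset (Fin n)) →
      ∑ s ∈ Finset.univ \ {i, j}, f s = (∑ s, f s) - (f i + f j) := by
    intro f i j hij
    rw [Finset.sum_sdiff_eq_sub (Finset.subset_univ _)]
    congr 1
    rw [Finset.sum_pair]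
    intro h; exact hij (by simp [h])
  have hP : ∑ i, ∑ j ∈ Finset.univ \ {i},
      (X i * Y i * Z j + X i * Y j * Z j + X j * Y i * Z i)
      = -3 * ∑ i, X i * Y i * Z i := by
    have h1 : ∀ i : Fin n, ∑ j ∈ Finset.univ \ {i},
        (X i * Y i * Z j + X i * Y j * Z j + X j * Y i * Z i)
        = X i * Y i * (0 - Z i) + X i * ((∑ j, Y j * Z j) - Y i * Z i)
          + (0 - X i) * (Y i * Z i) := by
      intro i
      rw [Finset.sum_add_distrib, Finset.sum_add_distrib]
      simp only [mul_assoc, ← Finset.mul_sum, ← Finset.sum_mul]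
      rw [key Z i, key (fun j => Y j * Z j) i, key X i, hZ, hX]
    rw [Finset.sum_congr rfl (fun i _ => h1 i)]
    simp only [Finset.sum_add_distrib]
    simp only [mul_sub, sub_mul, zero_mul, mul_zero, zero_sub, ← mul_assoc,
      neg_mul, mul_neg, Finset.sum_sub_distrib, Finset.sum_neg_distrib, ← Finset.sum_mul, hX, zero_mul]
    ring
  have hT : ∑ i, ∑ j ∈ Finset.univ \ {i}, ∑ s ∈ Finset.univ \ {i, j}, X i * Y j * Z s
      = 2 * ∑ i, X i * Y i * Z i := by
    have h2 : ∀ i : Fin n, ∑ j ∈ Finset.univ \ {i}, ∑ s ∈ Finset.univ \ {i, j},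
        X i * Y j * Z s
        = -(X i * Z i) * ((0:ℝ) - Y i) + (-X i) * ((∑ j, Y j * Z j) - Y i * Z i) := by
      intro i
      have e1 : ∀ j ∈ Finset.univ \ {i}, ∑ s ∈ Finset.univ \ {i, j}, X i * Y j * Z s
          = -(X i * Z i) * Y j + (-X i) * (Y j * Z j) := by
        intro j hj
        have hij : j ∉ ({i} : Finset (Fin n)) := (Finset.mem_sdiff.mp hj).2
        rw [← Finset.mul_sum, key2 Z i j hij, hZ]
        ring
      rw [Finset.sum_congr rfl e1, Finset.sum_add_distrib, ← Finset.mul_sum, ← Finset.mul_sum,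
        key Y i, key (fun j => Y j * Z j) i, hY]
    rw [Finset.sum_congr rfl (fun i _ => h2 i)]
    simp only [zero_sub, mul_neg, neg_mul, neg_neg, mul_sub, ← mul_assoc,
      Finset.sum_add_distrib, Finset.sum_sub_distrib, Finset.sum_neg_distrib,
      ← Finset.sum_mul, hX, zero_mul]
    have e2 : ∑ x, X x * Z x * Y x = ∑ x, X x * Y x * Z x :=
      Finset.sum_congr rfl (fun i _ => by ring)
    rw [e2]; ring
  rw [hP, hT]
  ring

/-- Algebraic identity: with `x'_i = x_i − x̄`, etc.,
`n³ ∑ (x_i−x̄)(y_i−ȳ)(z_i−z̄) = (n³−3n²+2n) ∑ x'y'z' − (n²−2n) ∑_{i≠j}(...) + 2n ∑_{distinct}`. -/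
theorem stmt6 (n : ℕ) (x y z : Fin n → ℝ)
    (xbar ybar zbar : ℝ)
    (hx : xbar = (n : ℝ)⁻¹ * ∑ i, x i)
    (hy : ybar = (n : ℝ)⁻¹ * ∑ i, y i)
    (hz : zbar = (n : ℝ)⁻¹ * ∑ i, z i) :
    (n : ℝ) ^ 3 * ∑ i, (x i - xbar) * (y i - ybar) * (z i - zbar)
    = ((n : ℝ) ^ 3 - 3 * (n : ℝ) ^ 2 + 2 * n) *
        ∑ i, (x i - xbar) * (y i - ybar) * (z i - zbar)
      - ((n : ℝ) ^ 2 - 2 * n) *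
        ∑ i, ∑ j ∈ Finset.univ \ {i},
          ((x i - xbar) * (y i - ybar) * (z j - zbar)
            + (x i - xbar) * (y j - ybar) * (z j - zbar)
            + (x j - xbar) * (y i - ybar) * (z i - zbar))
      + 2 * (n : ℝ) *
        ∑ i, ∑ j ∈ Finset.univ \ {i}, ∑ s ∈ Finset.univ \ {i, j},
          (x i - xbar) * (y j - ybar) * (z s - zbar) := by
  rcases Nat.eq_zero_or_pos n with h0 | hn
  · subst h0; simp
  have hn' : (n : ℝ) ≠ 0 := Nat.cast_ne_zero.mpr hn.ne'
  have hX : ∑ i, (x i - xbar) = 0 := by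
    rw [Finset.sum_sub_distrib, Finset.sum_const, Finset.card_univ, Fintype.card_fin,
      nsmul_eq_mul, hx]
    field_simp
    ring
  have hY : ∑ i, (y i - ybar) = 0 := by
    rw [Finset.sum_sub_distrib, Finset.sum_const, Finset.card_univ, Fintype.card_fin,
      nsmul_eq_mul, hy]
    field_simp
    ring
  have hZ : ∑ i, (z i - zbar) = 0 := by
    rw [Finset.sum_sub_distrib, Finset.sum_const, Finset.card_univ, Fintype.card_fin,
      nsmul_eq_mul, hz]
    field_simp
    ring
  exact stmt6_aux n (fun i => x i - xbar) (fun i => y i - ybar) (fun i => z i - zbar) hX hY hZ
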